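/- Let a, b ∈ ℝ_{++}ⁿ be strictly positive probability vectors, C ∈ ℝ₊^{n×n}, γ > 0. For any g ∈ ℝⁿ, let g^{(C,γ)‾} ∈ ℝⁿ be its (C,γ)‾-transform, i.e. g^{(C,γ)‾}_i = γ log a_i − γ log Σ_{j=1}^n exp((g_j − C_{ij})/γ) for each i. Then max_i (g^{(C,γ)‾}_i − γ log a_i) − min_i (g^{(C,γ)‾}_i − γ log a_i) ≤ max_{i,j} C_{ij} − min_{i,j} C_{ij} ≤ ‖C‖_∞. -/
import Mathlib


/-- **Equicontinuity of the (C,γ)‾-transform** (Lemma 4 of the paper).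
For strictly positive probability vectors `a, b`, `C ≥ 0`, `γ > 0` and any `g`,
the `(C,γ)‾`-transform `G_i = γ log a_i − γ log Σ_j exp((g_j − C_{ij})/γ)` satisfies
`max_i(G_i − γ log a_i) − min_i(G_i − γ log a_i) ≤ max C − min C ≤ ‖C‖_∞`. -/
theorem c_bar_transform_equicontinuity {n : ℕ} (hn : 0 < n)
    (a b : Fin n → ℝ) (C : Matrix (Fin n) (Fin n) ℝ) (γ : ℝ) (hγ : 0 < γ)
    (ha0 : ∀ i, 0 < a i) (hb0 : ∀ j, 0 < b j)
    (ha1 : ∑ i, a i = 1) (hb1 : ∑ j, b j = 1)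
    (hC : ∀ i j, 0 ≤ C i j)
    (g G : Fin n → ℝ)
    (hG : ∀ i, G i = γ * Real.log (a i) -
      γ * Real.log (∑ j, Real.exp ((g j - C i j) / γ))) :
    (⨆ i, (G i - γ * Real.log (a i))) - (⨅ i, (G i - γ * Real.log (a i))) ≤
        (⨆ i, ⨆ j, C i j) - (⨅ i, ⨅ j, C i j) ∧
      (⨆ i, ⨆ j, C i j) - (⨅ i, ⨅ j, C i j) ≤ ⨆ i, ⨆ j, |C i j| := by
  haveI : Nonempty (Fin n) := Fin.pos_iff_nonempty.mp hn
  have hbdd : ∀ (h : Fin n → ℝ), BddAbove (Set.range h) :=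
    fun h => (Set.finite_range h).bddAbove
  have hbdd' : ∀ (h : Fin n → ℝ), BddBelow (Set.range h) :=
    fun h => (Set.finite_range h).bddBelow
  set M : ℝ := ⨆ i, ⨆ j, C i j with hM
  set m : ℝ := ⨅ i, ⨅ j, C i j with hm
  have hCM : ∀ i j, C i j ≤ M := fun i j =>
    le_trans (le_ciSup (hbdd (C i)) j) (le_ciSup (hbdd fun i => ⨆ j, C i j) i)
  have hmC : ∀ i j, m ≤ C i j := fun i j =>
    le_trans (ciInf_le (hbdd' fun i => ⨅ j, C i j) i) (ciInf_le (hbdd' (C i)) j)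
  set f : Fin n → ℝ := fun i => G i - γ * Real.log (a i) with hf
  have hS : ∀ i, (0:ℝ) < ∑ j, Real.exp ((g j - C i j) / γ) :=
    fun i => Finset.sum_pos (fun j _ => Real.exp_pos _) Finset.univ_nonempty
  have hfi : ∀ i, f i = -(γ * Real.log (∑ j, Real.exp ((g j - C i j) / γ))) := by
    intro i; rw [hf]; simp only [hG i]; ring
  set T : ℝ := ∑ j, Real.exp (g j / γ) with hT
  have hTpos : 0 < T :=
    Finset.sum_pos (fun j _ => Real.exp_pos _) Finset.univ_nonempty
  have hup : ∀ i, ∑ j, Real.exp ((g j - C i j) / γ) ≤ Real.exp (-m / γ) * T := by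
    intro i
    rw [hT, Finset.mul_sum]
    apply Finset.sum_le_sum
    intro j _
    rw [← Real.exp_add]
    apply Real.exp_le_exp.mpr
    have h1 : (g j - C i j) / γ ≤ (g j - m) / γ := by
      gcongr
      exact hmC i j
    have h2 : (g j - m) / γ = -m / γ + g j / γ := by ring
    linarith
  have hlo : ∀ i, Real.exp (-M / γ) * T ≤ ∑ j, Real.exp ((g j - C i j) / γ) := by
    intro i
    rw [hT, Finset.mul_sum]
    apply Finset.sum_le_sum
    intro j _
    rw [← Real.exp_add]
    apply Real.exp_le_exp.mpr
    have h1 : (g j - M) / γ ≤ (g j - C i j) / γ := by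
      gcongr
      exact hCM i j
    have h2 : (g j - M) / γ = -M / γ + g j / γ := by ring
    linarith
  have key : ∀ i k, f i - f k ≤ M - m := by
    intro i k
    have hlogk : Real.log (∑ j, Real.exp ((g j - C k j) / γ)) ≤ -m / γ + Real.log T := by
      calc Real.log (∑ j, Real.exp ((g j - C k j) / γ))
          ≤ Real.log (Real.exp (-m / γ) * T) := Real.log_le_log (hS k) (hup k)
        _ = -m / γ + Real.log T := by
            rw [Real.log_mul (Real.exp_ne_zero _) (ne_of_gt hTpos), Real.log_exp]
    have hlogi : -M / γ + Real.log T ≤ Real.log (∑ j, Real.exp ((g j - C i j) / γ)) := by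
      calc -M / γ + Real.log T
          = Real.log (Real.exp (-M / γ) * T) := by
            rw [Real.log_mul (Real.exp_ne_zero _) (ne_of_gt hTpos), Real.log_exp]
        _ ≤ _ := Real.log_le_log (mul_pos (Real.exp_pos _) hTpos) (hlo i)
    have hsum : Real.log (∑ j, Real.exp ((g j - C k j) / γ)) -
        Real.log (∑ j, Real.exp ((g j - C i j) / γ)) ≤ (M - m) / γ := by
      have : (M - m) / γ = (-m / γ + Real.log T) - (-M / γ + Real.log T) := by ring
      linarith
    have hmul := mul_le_mul_of_nonneg_left hsum hγ.le
    have hfieq : γ * ((M - m) / γ) = M - m := by field_simp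
    rw [hfi i, hfi k]
    nlinarith [hmul, hfieq]
  constructor
  · apply sub_le_iff_le_add.mpr
    apply ciSup_le
    intro i
    have h1 : f i - (M - m) ≤ ⨅ k, f k := le_ciInf fun k => by linarith [key i k]
    linarith
  · have hm0 : 0 ≤ m := le_ciInf fun i => le_ciInf fun j => hC i j
    have hMabs : M ≤ ⨆ i, ⨆ j, |C i j| := by
      apply ciSup_le; intro i
      apply ciSup_le; intro j
      exact (le_abs_self _).trans
        ((le_ciSup (hbdd fun j => |C i j|) j).trans
          (le_ciSup (hbdd fun i => ⨆ j, |C i j|) i))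
    linarith
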